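/- There exists a constant C > 0 such that for all t > 0 and all x, y ∈ [0,1], ∫₀^t ∫₀¹ (G_s(x,ξ) − G_s(y,ξ))² dξ ds ≤ C |x−y|, where G is the Neumann heat kernel on (0,1). -/

import Mathlib

open MeasureTheory Real Filter
open scoped ENNReal NNReal

/-- Neumann heat kernel on (0,1), via its eigenfunction expansion. -/
noncomputable def NeumannHeatKernel (t x y : ℝ) : ℝ :=
  1 + ∑' n : ℕ, 2 * Real.exp (-((n + 1 : ℝ) ^ 2) * Real.pi ^ 2 * t) *
      Real.cos ((n + 1 : ℝ) * Real.pi * x) * Real.cos ((n + 1 : ℝ) * Real.pi * y)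

noncomputable def nhkC (n : ℕ) (ξ : ℝ) : ℝ := Real.cos ((n + 1 : ℝ) * Real.pi * ξ)
noncomputable def nhkE (s : ℝ) (n : ℕ) : ℝ := Real.exp (-((n + 1 : ℝ) ^ 2) * Real.pi ^ 2 * s)

lemma nhkC_cont (n : ℕ) : Continuous (nhkC n) := by unfold nhkC; fun_prop

lemma nhkC_abs (n : ℕ) (ξ : ℝ) : |nhkC n ξ| ≤ 1 := Real.abs_cos_le_one _

lemma nhk_integral_cos_int (k : ℤ) :
    ∫ ξ in (0:ℝ)..1, Real.cos ((k : ℝ) * Real.pi * ξ) = if k = 0 then 1 else 0 := by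
  rcases eq_or_ne k 0 with hk | hk
  · simp [hk]
  · have hc : (k : ℝ) * Real.pi ≠ 0 := mul_ne_zero (Int.cast_ne_zero.mpr hk) Real.pi_ne_zero
    have hd : ∀ ξ : ℝ, HasDerivAt (fun u => Real.sin ((k:ℝ) * Real.pi * u) / ((k:ℝ) * Real.pi))
        (Real.cos ((k:ℝ) * Real.pi * ξ)) ξ := by
      intro ξ
      have h1 : HasDerivAt (fun u : ℝ => (k:ℝ) * Real.pi * u) ((k:ℝ) * Real.pi) ξ := by
        simpa using (hasDerivAt_id ξ).const_mul ((k:ℝ) * Real.pi)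
      have h2 := ((Real.hasDerivAt_sin ((k:ℝ) * Real.pi * ξ)).comp ξ h1).div_const ((k:ℝ) * Real.pi)
      exact h2.congr_deriv (mul_div_cancel_right₀ _ hc)
    rw [intervalIntegral.integral_eq_sub_of_hasDerivAt (fun ξ _ => hd ξ)
      ((Real.continuous_cos.comp (continuous_const.mul continuous_id)).intervalIntegrable 0 1)]
    simp [Real.sin_int_mul_pi, hk]

lemma nhk_orth (m n : ℕ) :
    ∫ ξ in Set.Ioc (0:ℝ) 1, nhkC m ξ * nhkC n ξ = if m = n then (1/2 : ℝ) else 0 := by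
  rw [← intervalIntegral.integral_of_le (zero_le_one)]
  have key : ∀ ξ : ℝ, nhkC m ξ * nhkC n ξ =
      (Real.cos ((((m : ℤ) - n : ℤ) : ℝ) * Real.pi * ξ) +
        Real.cos ((((m : ℤ) + n + 2 : ℤ) : ℝ) * Real.pi * ξ)) / 2 := by
    intro ξ
    unfold nhkC
    have h1 : (((m : ℤ) - n : ℤ) : ℝ) * Real.pi * ξ =
        (m + 1 : ℝ) * Real.pi * ξ - (n + 1 : ℝ) * Real.pi * ξ := by push_cast; ring
    have h2 : (((m : ℤ) + n + 2 : ℤ) : ℝ) * Real.pi * ξ =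
        (m + 1 : ℝ) * Real.pi * ξ + (n + 1 : ℝ) * Real.pi * ξ := by push_cast; ring
    rw [h1, h2, Real.cos_sub, Real.cos_add]
    ring
  rw [intervalIntegral.integral_congr (fun ξ _ => key ξ)]
  have i1 : IntervalIntegrable (fun ξ => Real.cos ((((m : ℤ) - n : ℤ) : ℝ) * Real.pi * ξ)) volume 0 1 := by
    apply Continuous.intervalIntegrable; fun_prop
  have i2 : IntervalIntegrable (fun ξ => Real.cos ((((m : ℤ) + n + 2 : ℤ) : ℝ) * Real.pi * ξ)) volume 0 1 := by
    apply Continuous.intervalIntegrable; fun_prop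
  rw [intervalIntegral.integral_div, intervalIntegral.integral_add i1 i2,
    nhk_integral_cos_int, nhk_integral_cos_int]
  have h2 : ¬ ((m : ℤ) + n + 2 = 0) := by omega
  rcases eq_or_ne m n with h | h
  · subst h
    simp [h2]
  · have : ¬ ((m : ℤ) - n = 0) := by omega
    simp [h, this, h2]

lemma nhk_swap (a : ℕ → ℝ) (ha : Summable fun n => |a n|) (g : ℝ → ℝ) (hg : Continuous g)
    (Cg : ℝ) (hCg : ∀ ξ, |g ξ| ≤ Cg) :
    ∫ ξ in Set.Ioc (0:ℝ) 1, (∑' n, a n * nhkC n ξ) * g ξ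
      = ∑' n, a n * ∫ ξ in Set.Ioc (0:ℝ) 1, nhkC n ξ * g ξ := by
  have hCg0 : 0 ≤ Cg := le_trans (abs_nonneg _) (hCg 0)
  have h0 : ∀ ξ : ℝ, (∑' n, a n * nhkC n ξ) * g ξ = ∑' n, a n * nhkC n ξ * g ξ :=
    fun ξ => (tsum_mul_right).symm
  have hmeas : ∀ n : ℕ, AEStronglyMeasurable (fun ξ => a n * nhkC n ξ * g ξ)
      (volume.restrict (Set.Ioc (0:ℝ) 1)) :=
    fun n => ((continuous_const.mul (nhkC_cont n)).mul hg).aestronglyMeasurable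
  have hbound : ∀ n : ℕ, ∫⁻ ξ in Set.Ioc (0:ℝ) 1, ‖a n * nhkC n ξ * g ξ‖₊ ∂volume
      ≤ ENNReal.ofReal (|a n| * Cg) := by
    intro n
    have hpt : ∀ ξ : ℝ, (‖a n * nhkC n ξ * g ξ‖₊ : ℝ≥0∞) ≤ ENNReal.ofReal (|a n| * Cg) := by
      intro ξ
      rw [← enorm_eq_nnnorm, ← ofReal_norm]
      apply ENNReal.ofReal_le_ofReal
      calc ‖a n * nhkC n ξ * g ξ‖ = |a n| * |nhkC n ξ| * |g ξ| := by
            simp [Real.norm_eq_abs, abs_mul]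
        _ ≤ |a n| * 1 * Cg :=
            mul_le_mul (mul_le_mul_of_nonneg_left (nhkC_abs n ξ) (abs_nonneg _)) (hCg ξ)
              (abs_nonneg _) (by positivity)
        _ = |a n| * Cg := by ring
    calc ∫⁻ ξ in Set.Ioc (0:ℝ) 1, ‖a n * nhkC n ξ * g ξ‖₊ ∂volume
        ≤ ∫⁻ _ in Set.Ioc (0:ℝ) 1, ENNReal.ofReal (|a n| * Cg) ∂volume :=
          lintegral_mono (fun ξ => hpt ξ)
      _ = ENNReal.ofReal (|a n| * Cg) * volume (Set.Ioc (0:ℝ) 1) := by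
          rw [setLIntegral_const]
      _ ≤ ENNReal.ofReal (|a n| * Cg) := by
          rw [Real.volume_Ioc]
          simp
  have hne : (∑' n : ℕ, ∫⁻ ξ in Set.Ioc (0:ℝ) 1, ‖a n * nhkC n ξ * g ξ‖₊ ∂volume) ≠ ⊤ := by
    apply ne_top_of_le_ne_top _ (ENNReal.tsum_le_tsum hbound)
    rw [← ENNReal.ofReal_tsum_of_nonneg (fun n => mul_nonneg (abs_nonneg _) hCg0)
      (ha.mul_right Cg)]
    exact ENNReal.ofReal_ne_top
  calc ∫ ξ in Set.Ioc (0:ℝ) 1, (∑' n, a n * nhkC n ξ) * g ξ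
      = ∫ ξ in Set.Ioc (0:ℝ) 1, ∑' n, a n * nhkC n ξ * g ξ := by
        apply integral_congr_ae; filter_upwards with ξ using h0 ξ
    _ = ∑' n, ∫ ξ in Set.Ioc (0:ℝ) 1, a n * nhkC n ξ * g ξ := integral_tsum hmeas hne
    _ = ∑' n, a n * ∫ ξ in Set.Ioc (0:ℝ) 1, nhkC n ξ * g ξ := by
        apply tsum_congr; intro n
        rw [← integral_const_mul]
        apply integral_congr_ae; filter_upwards with ξ using by ring

lemma nhk_parseval (a : ℕ → ℝ) (ha : Summable fun n => |a n|) :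
    ∫ ξ in Set.Ioc (0:ℝ) 1, (∑' n, a n * nhkC n ξ) ^ 2 = ∑' n, (a n) ^ 2 / 2 := by
  set f : ℝ → ℝ := fun ξ => ∑' n, a n * nhkC n ξ with hf
  have hterm : ∀ (n : ℕ) (ξ : ℝ), ‖a n * nhkC n ξ‖ ≤ |a n| := by
    intro n ξ
    rw [Real.norm_eq_abs, abs_mul]
    calc |a n| * |nhkC n ξ| ≤ |a n| * 1 := mul_le_mul_of_nonneg_left (nhkC_abs n ξ) (abs_nonneg _)
      _ = |a n| := mul_one _
  have hfc : Continuous f :=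
    continuous_tsum (fun n => continuous_const.mul (nhkC_cont n)) ha (fun n ξ => hterm n ξ)
  have hfb : ∀ ξ, |f ξ| ≤ ∑' n, |a n| := by
    intro ξ
    have h1 : Summable fun n => ‖a n * nhkC n ξ‖ :=
      Summable.of_nonneg_of_le (fun n => norm_nonneg _) (fun n => hterm n ξ) ha
    calc |f ξ| = ‖∑' n, a n * nhkC n ξ‖ := by rw [Real.norm_eq_abs]
      _ ≤ ∑' n, ‖a n * nhkC n ξ‖ := norm_tsum_le_tsum_norm h1
      _ ≤ ∑' n, |a n| := Summable.tsum_le_tsum (fun n => hterm n ξ) h1 ha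
  have step1 : ∫ ξ in Set.Ioc (0:ℝ) 1, f ξ ^ 2
      = ∑' n, a n * ∫ ξ in Set.Ioc (0:ℝ) 1, nhkC n ξ * f ξ := by
    rw [← nhk_swap a ha f hfc (∑' n, |a n|) hfb]
    apply integral_congr_ae; filter_upwards with ξ using (sq (f ξ) ▸ by rw [sq])
  have step2 : ∀ n : ℕ, ∫ ξ in Set.Ioc (0:ℝ) 1, nhkC n ξ * f ξ = a n / 2 := by
    intro n
    have hcomm : ∫ ξ in Set.Ioc (0:ℝ) 1, nhkC n ξ * f ξ
        = ∫ ξ in Set.Ioc (0:ℝ) 1, f ξ * nhkC n ξ := by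
      apply integral_congr_ae; filter_upwards with ξ using mul_comm _ _
    rw [hcomm, nhk_swap a ha (nhkC n) (nhkC_cont n) 1 (fun ξ => nhkC_abs n ξ)]
    have : ∀ m : ℕ, a m * ∫ ξ in Set.Ioc (0:ℝ) 1, nhkC m ξ * nhkC n ξ
        = if m = n then a m / 2 else 0 := by
      intro m
      rw [nhk_orth m n]
      rcases eq_or_ne m n with h | h
      · simp [h]; ring
      · simp [h]
    rw [tsum_congr this, tsum_eq_single n (fun m hm => by simp [hm])]
    simp
  rw [step1, tsum_congr (fun n => by rw [step2 n])]
  exact tsum_congr (fun n => by ring)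

lemma nhk_summable_inv_sq : Summable (fun n : ℕ => 1 / ((n + 1 : ℝ) ^ 2)) := by
  have h := (Real.summable_one_div_nat_pow (p := 2)).mpr one_lt_two
  have h2 := (summable_nat_add_iff (f := fun n : ℕ => 1 / (n : ℝ) ^ 2) 1).mpr h
  apply h2.congr
  intro n
  push_cast
  ring_nf

lemma nhk_telescope (N : ℕ) (hN : 1 ≤ N) :
    HasSum (fun n : ℕ => 1 / ((n : ℝ) + N) - 1 / ((n : ℝ) + N + 1)) (1 / (N : ℝ)) := by
  have hN' : (1:ℝ) ≤ (N:ℝ) := by exact_mod_cast hN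
  have hpos : ∀ n : ℕ, (0:ℝ) < (n : ℝ) + N := by intro n; positivity
  have hnonneg : ∀ n : ℕ, 0 ≤ 1 / ((n : ℝ) + N) - 1 / ((n : ℝ) + N + 1) := by
    intro n
    have h1 := hpos n
    rw [sub_nonneg]
    apply one_div_le_one_div_of_le h1
    linarith
  rw [hasSum_iff_tendsto_nat_of_nonneg hnonneg]
  have hsum : ∀ m : ℕ, ∑ i ∈ Finset.range m, (1 / ((i : ℝ) + N) - 1 / ((i : ℝ) + N + 1))
      = 1 / (N : ℝ) - 1 / ((m : ℝ) + N) := by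
    intro m
    have h := Finset.sum_range_sub' (f := fun i : ℕ => 1 / ((i : ℝ) + N)) m
    simp only [Nat.cast_zero, zero_add] at h
    rw [← h]
    apply Finset.sum_congr rfl
    intro i _
    push_cast
    ring_nf
  simp only [hsum]
  have hlim : Tendsto (fun m : ℕ => 1 / ((m : ℝ) + N)) atTop (nhds 0) := by
    simp only [one_div]
    exact Tendsto.comp tendsto_inv_atTop_zero
      (tendsto_atTop_add_const_right atTop _ tendsto_natCast_atTop_atTop)
  simpa using tendsto_const_nhds.sub hlim

lemma nhk_stepC (δ : ℝ) (hδ : 0 < δ) (hδ1 : δ ≤ 1) (d : ℕ → ℝ) (hd2 : ∀ n, |d n| ≤ 2)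
    (hdl : ∀ n, |d n| ≤ ((n:ℝ) + 1) * Real.pi * δ) :
    ∑' n : ℕ, d n ^ 2 / (((n:ℝ) + 1) ^ 2 * Real.pi ^ 2) ≤ 3 * δ := by
  have hpi : 0 < Real.pi := Real.pi_pos
  have hpi4 : 4 ≤ Real.pi ^ 2 := by nlinarith [Real.pi_gt_three]
  set T : ℕ → ℝ := fun n => d n ^ 2 / (((n:ℝ) + 1) ^ 2 * Real.pi ^ 2) with hT
  have hden : ∀ n : ℕ, (0:ℝ) < ((n:ℝ) + 1) ^ 2 * Real.pi ^ 2 := by intro n; positivity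
  have hd4 : ∀ n : ℕ, d n ^ 2 ≤ 4 := by
    intro n
    calc d n ^ 2 = |d n| ^ 2 := (sq_abs _).symm
      _ ≤ 2 ^ 2 := pow_le_pow_left₀ (abs_nonneg _) (hd2 n) 2
      _ = 4 := by norm_num
  have hTd : ∀ n, T n ≤ δ ^ 2 := by
    intro n
    rw [hT]
    rw [div_le_iff₀ (hden n)]
    calc d n ^ 2 = |d n| ^ 2 := (sq_abs _).symm
      _ ≤ (((n:ℝ) + 1) * Real.pi * δ) ^ 2 := pow_le_pow_left₀ (abs_nonneg _) (hdl n) 2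
      _ = δ ^ 2 * (((n:ℝ) + 1) ^ 2 * Real.pi ^ 2) := by ring
  have hT4 : ∀ n, T n ≤ 4 / (((n:ℝ) + 1) ^ 2 * Real.pi ^ 2) := by
    intro n
    rw [hT]
    exact (div_le_div_iff_of_pos_right (hden n)).mpr (hd4 n)
  have hTpos : ∀ n, 0 ≤ T n := fun n => div_nonneg (sq_nonneg _) (hden n).le
  have hsum4 : Summable (fun n : ℕ => 4 / (((n:ℝ) + 1) ^ 2 * Real.pi ^ 2)) := by
    apply (nhk_summable_inv_sq.mul_left (4 / Real.pi ^ 2)).congr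
    intro n
    field_simp
  have hsumT : Summable T := Summable.of_nonneg_of_le hTpos hT4 hsum4
  set N := ⌈δ⁻¹⌉₊ with hNdef
  have hN1 : 1 ≤ N := Nat.one_le_iff_ne_zero.mpr (Nat.ceil_pos.mpr (by positivity)).ne'
  have hN' : (1:ℝ) ≤ (N:ℝ) := by exact_mod_cast hN1
  have hNge : δ⁻¹ ≤ (N:ℝ) := Nat.le_ceil _
  have hinv1 : (1:ℝ) ≤ δ⁻¹ := by
    have h := mul_inv_cancel₀ hδ.ne'
    nlinarith [inv_pos.mpr hδ]
  have hNle : (N:ℝ) ≤ 2 * δ⁻¹ := by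
    have h1 : (N:ℝ) < δ⁻¹ + 1 := Nat.ceil_lt_add_one (by positivity)
    linarith
  rw [← Summable.sum_add_tsum_nat_add N hsumT]
  have hA : ∑ i ∈ Finset.range N, T i ≤ (N:ℝ) * δ ^ 2 := by
    calc ∑ i ∈ Finset.range N, T i ≤ ∑ _i ∈ Finset.range N, δ ^ 2 :=
          Finset.sum_le_sum (fun i _ => hTd i)
      _ = (N:ℝ) * δ ^ 2 := by rw [Finset.sum_const, Finset.card_range, nsmul_eq_mul]
  have hA2 : (N:ℝ) * δ ^ 2 ≤ 2 * δ := by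
    have h := mul_inv_cancel₀ hδ.ne'
    calc (N:ℝ) * δ ^ 2 ≤ (2 * δ⁻¹) * δ ^ 2 :=
          mul_le_mul_of_nonneg_right hNle (sq_nonneg _)
      _ = 2 * δ := by field_simp
  have htel := nhk_telescope N hN1
  have hB : ∑' n : ℕ, T (n + N) ≤ (4 / Real.pi ^ 2) * (1 / (N:ℝ)) := by
    have hb : ∀ n : ℕ, T (n + N)
        ≤ (4 / Real.pi ^ 2) * (1 / ((n:ℝ) + N) - 1 / ((n:ℝ) + N + 1)) := by
      intro n
      have hposn : (0:ℝ) < (n:ℝ) + N := by positivity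
      have h1 : T (n + N) ≤ 4 / ((((n:ℝ) + N) + 1) ^ 2 * Real.pi ^ 2) := by
        have := hT4 (n + N)
        rwa [show (((n + N : ℕ) : ℝ) + 1) = ((n:ℝ) + N) + 1 by push_cast; ring] at this
      refine h1.trans ?_
      have key : 1 / ((n:ℝ) + N) - 1 / ((n:ℝ) + N + 1)
          = 1 / (((n:ℝ) + N) * ((n:ℝ) + N + 1)) := by
        field_simp
        ring
      rw [key, mul_one_div, div_div, div_le_div_iff₀ (by positivity) (by positivity)]
      nlinarith [mul_nonneg (sq_nonneg Real.pi) hposn.le, sq_nonneg Real.pi]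
    calc ∑' n : ℕ, T (n + N)
        ≤ ∑' n : ℕ, (4 / Real.pi ^ 2) * (1 / ((n:ℝ) + N) - 1 / ((n:ℝ) + N + 1)) :=
          Summable.tsum_le_tsum hb ((summable_nat_add_iff N).mpr hsumT) (htel.summable.mul_left _)
      _ = (4 / Real.pi ^ 2) * (1 / (N:ℝ)) := by rw [tsum_mul_left, htel.tsum_eq]
  have hB2 : (4 / Real.pi ^ 2) * (1 / (N:ℝ)) ≤ δ := by
    have hNpos : (0:ℝ) < N := by linarith
    have h1 : 1 / (N:ℝ) ≤ δ := by
      rw [div_le_iff₀ hNpos]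
      have h := mul_inv_cancel₀ hδ.ne'
      nlinarith
    have h2 : 4 / Real.pi ^ 2 ≤ 1 := by
      rw [div_le_one (by positivity)]
      linarith
    calc (4 / Real.pi ^ 2) * (1 / (N:ℝ)) ≤ 1 * δ :=
          mul_le_mul h2 h1 (by positivity) one_pos.le
      _ = δ := one_mul δ
  linarith

lemma nhkE_summable {s : ℝ} (hs : 0 < s) : Summable (nhkE s) := by
  have hr1 : Real.exp (-(Real.pi ^ 2 * s)) < 1 := by
    rw [Real.exp_lt_one_iff]
    have : 0 < Real.pi ^ 2 * s := by positivity
    linarith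
  have hr0 : 0 ≤ Real.exp (-(Real.pi ^ 2 * s)) := (Real.exp_pos _).le
  refine Summable.of_nonneg_of_le (fun n => (Real.exp_pos _).le) (fun n => ?_)
    ((summable_geometric_of_lt_one hr0 hr1).mul_left (Real.exp (-(Real.pi ^ 2 * s))))
  · unfold nhkE
    rw [← Real.exp_nat_mul, ← Real.exp_add]
    apply Real.exp_le_exp.mpr
    have h1 : ((n:ℝ) + 1) ≤ ((n:ℝ) + 1) ^ 2 := by nlinarith [Nat.cast_nonneg (α := ℝ) n]
    have h2 : (0:ℝ) < Real.pi ^ 2 * s := by positivity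
    nlinarith [Nat.cast_nonneg (α := ℝ) n]

lemma nhk_integral_exp_le {c t : ℝ} (hc : 0 < c) (ht : 0 < t) :
    (∫ s in Set.Ioc (0:ℝ) t, Real.exp (-c * s)) ≤ 1 / c := by
  rw [← intervalIntegral.integral_of_le ht.le]
  have hd : ∀ s : ℝ, HasDerivAt (fun u => -Real.exp (-c * u) / c) (Real.exp (-c * s)) s := by
    intro s
    have h1 : HasDerivAt (fun u : ℝ => -c * u) (-c) s := by
      simpa using (hasDerivAt_id s).const_mul (-c)
    have h2 := (((Real.hasDerivAt_exp (-c * s)).comp s h1).neg).div_const c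
    exact h2.congr_deriv (by rw [mul_neg, neg_neg, mul_div_cancel_right₀ _ hc.ne'])
  rw [intervalIntegral.integral_eq_sub_of_hasDerivAt (fun s _ => hd s)
    ((Real.continuous_exp.comp (continuous_const.mul continuous_id)).intervalIntegrable 0 t)]
  have h3 : 0 < Real.exp (-c * t) := Real.exp_pos _
  rw [mul_zero, Real.exp_zero]
  have h4 : -Real.exp (-c * t) / c - -1 / c = (1 - Real.exp (-c * t)) / c := by ring
  rw [h4]
  exact (div_le_div_iff_of_pos_right hc).mpr (by linarith)

lemma nhk_diff_eq {s : ℝ} (hs : 0 < s) (x y ξ : ℝ) :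
    NeumannHeatKernel s x ξ - NeumannHeatKernel s y ξ
      = ∑' n : ℕ, (2 * nhkE s n * (Real.cos ((n + 1 : ℝ) * Real.pi * x)
          - Real.cos ((n + 1 : ℝ) * Real.pi * y))) * nhkC n ξ := by
  unfold NeumannHeatKernel
  have hbx : Summable (fun n : ℕ => 2 * Real.exp (-((n + 1 : ℝ) ^ 2) * Real.pi ^ 2 * s) *
      Real.cos ((n + 1 : ℝ) * Real.pi * x) * Real.cos ((n + 1 : ℝ) * Real.pi * ξ)) := by
    apply Summable.of_norm_bounded (g := fun n => 2 * nhkE s n) ((nhkE_summable hs).mul_left 2)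
    intro n
    rw [Real.norm_eq_abs, abs_mul, abs_mul, abs_mul]
    have h1 := Real.abs_cos_le_one ((n + 1 : ℝ) * Real.pi * x)
    have h2 := Real.abs_cos_le_one ((n + 1 : ℝ) * Real.pi * ξ)
    have h3 : |Real.exp (-((n + 1 : ℝ) ^ 2) * Real.pi ^ 2 * s)| = nhkE s n := by
      rw [abs_of_pos (Real.exp_pos _)]; rfl
    rw [h3]
    have h4 : (0:ℝ) ≤ nhkE s n := (Real.exp_pos _).le
    calc |(2:ℝ)| * nhkE s n * |Real.cos ((n + 1 : ℝ) * Real.pi * x)| * |Real.cos ((n + 1 : ℝ) * Real.pi * ξ)|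
        ≤ |(2:ℝ)| * nhkE s n * 1 * 1 := by
          apply mul_le_mul (mul_le_mul_of_nonneg_left h1 (mul_nonneg (abs_nonneg _) h4)) h2
            (abs_nonneg _) (mul_nonneg (mul_nonneg (abs_nonneg _) h4) zero_le_one)
      _ = 2 * nhkE s n := by simp
  have hby : Summable (fun n : ℕ => 2 * Real.exp (-((n + 1 : ℝ) ^ 2) * Real.pi ^ 2 * s) *
      Real.cos ((n + 1 : ℝ) * Real.pi * y) * Real.cos ((n + 1 : ℝ) * Real.pi * ξ)) := by
    apply Summable.of_norm_bounded (g := fun n => 2 * nhkE s n) ((nhkE_summable hs).mul_left 2)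
    intro n
    rw [Real.norm_eq_abs, abs_mul, abs_mul, abs_mul]
    have h1 := Real.abs_cos_le_one ((n + 1 : ℝ) * Real.pi * y)
    have h2 := Real.abs_cos_le_one ((n + 1 : ℝ) * Real.pi * ξ)
    have h3 : |Real.exp (-((n + 1 : ℝ) ^ 2) * Real.pi ^ 2 * s)| = nhkE s n := by
      rw [abs_of_pos (Real.exp_pos _)]; rfl
    rw [h3]
    have h4 : (0:ℝ) ≤ nhkE s n := (Real.exp_pos _).le
    calc |(2:ℝ)| * nhkE s n * |Real.cos ((n + 1 : ℝ) * Real.pi * y)| * |Real.cos ((n + 1 : ℝ) * Real.pi * ξ)|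
        ≤ |(2:ℝ)| * nhkE s n * 1 * 1 := by
          apply mul_le_mul (mul_le_mul_of_nonneg_left h1 (mul_nonneg (abs_nonneg _) h4)) h2
            (abs_nonneg _) (mul_nonneg (mul_nonneg (abs_nonneg _) h4) zero_le_one)
      _ = 2 * nhkE s n := by simp
  rw [show ∀ A B : ℝ, 1 + A - (1 + B) = A - B by intro A B; ring]
  rw [← Summable.tsum_sub hbx hby]
  apply tsum_congr
  intro n
  unfold nhkE nhkC
  ring

theorem stmt_1 :
    ∃ C > 0, ∀ t : ℝ, 0 < t → ∀ x ∈ Set.Icc (0:ℝ) 1, ∀ y ∈ Set.Icc (0:ℝ) 1,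
      ∫ s in (0:ℝ)..t, ∫ ξ in (0:ℝ)..1,
          (NeumannHeatKernel s x ξ - NeumannHeatKernel s y ξ) ^ 2 ≤ C * |x - y| := by
  refine ⟨3, by norm_num, ?_⟩
  intro t ht x hx y hy
  rcases eq_or_ne x y with hxy | hxy
  · simp [hxy]
  have hpi : 0 < Real.pi := Real.pi_pos
  set δ : ℝ := |x - y| with hδdef
  have hδ : 0 < δ := abs_pos.mpr (sub_ne_zero.mpr hxy)
  have hδ1 : δ ≤ 1 := by
    rw [hδdef, abs_le]
    constructor <;> [linarith [hx.1, hy.2]; linarith [hx.2, hy.1]]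
  set d : ℕ → ℝ := fun n =>
    Real.cos ((n + 1 : ℝ) * Real.pi * x) - Real.cos ((n + 1 : ℝ) * Real.pi * y) with hddef
  have hd2 : ∀ n, |d n| ≤ 2 := by
    intro n
    calc |d n| ≤ |Real.cos ((n + 1 : ℝ) * Real.pi * x)| + |Real.cos ((n + 1 : ℝ) * Real.pi * y)| :=
          abs_sub _ _
      _ ≤ 1 + 1 := add_le_add (Real.abs_cos_le_one _) (Real.abs_cos_le_one _)
      _ = 2 := by norm_num
  have hdl : ∀ n, |d n| ≤ ((n:ℝ) + 1) * Real.pi * δ := by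
    intro n
    rw [hddef]
    simp only
    rw [Real.cos_sub_cos, abs_mul, abs_mul]
    have h1 : |Real.sin (((n + 1 : ℝ) * Real.pi * x + (n + 1 : ℝ) * Real.pi * y) / 2)| ≤ 1 :=
      abs_le.mpr ⟨Real.neg_one_le_sin _, Real.sin_le_one _⟩
    have h2 : |Real.sin (((n + 1 : ℝ) * Real.pi * x - (n + 1 : ℝ) * Real.pi * y) / 2)|
        ≤ ((n:ℝ) + 1) * Real.pi * δ / 2 := by
      refine (Real.abs_sin_le_abs).trans ?_
      rw [show ((n + 1 : ℝ) * Real.pi * x - (n + 1 : ℝ) * Real.pi * y) / 2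
          = (((n:ℝ) + 1) * Real.pi / 2) * (x - y) by ring]
      rw [abs_mul, abs_of_nonneg (by positivity : (0:ℝ) ≤ ((n:ℝ) + 1) * Real.pi / 2)]
      rw [← hδdef]
      ring_nf
      exact le_refl _
    calc |(-2:ℝ)| * |Real.sin (((n + 1 : ℝ) * Real.pi * x + (n + 1 : ℝ) * Real.pi * y) / 2)|
          * |Real.sin (((n + 1 : ℝ) * Real.pi * x - (n + 1 : ℝ) * Real.pi * y) / 2)|
        ≤ 2 * 1 * (((n:ℝ) + 1) * Real.pi * δ / 2) := by
          apply mul_le_mul (by rw [abs_neg, abs_two]; exact mul_le_mul_of_nonneg_left h1 (by norm_num)) h2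
            (abs_nonneg _) (by norm_num)
      _ = ((n:ℝ) + 1) * Real.pi * δ := by ring
  -- the coefficients
  set a : ℝ → ℕ → ℝ := fun s n => 2 * nhkE s n * d n with hadef
  have hasumm : ∀ s : ℝ, 0 < s → Summable (fun n => |a s n|) := by
    intro s hs
    refine Summable.of_nonneg_of_le (fun n => abs_nonneg _) (fun n => ?_)
      ((nhkE_summable hs).mul_left 4)
    rw [hadef]
    simp only
    have hE : (0:ℝ) < nhkE s n := Real.exp_pos _
    rw [abs_mul, abs_mul, abs_two, abs_of_pos hE]
    calc 2 * nhkE s n * |d n| ≤ 2 * nhkE s n * 2 :=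
          mul_le_mul_of_nonneg_left (hd2 n) (by positivity)
      _ = 4 * nhkE s n := by ring
  -- inner integral identity on Ioc 0 t
  have key : ∀ s ∈ Set.Ioc (0:ℝ) t,
      (∫ ξ in (0:ℝ)..1, (NeumannHeatKernel s x ξ - NeumannHeatKernel s y ξ) ^ 2)
        = ∑' n : ℕ, (a s n) ^ 2 / 2 := by
    intro s hs
    rw [intervalIntegral.integral_of_le zero_le_one]
    rw [show (fun ξ => (NeumannHeatKernel s x ξ - NeumannHeatKernel s y ξ) ^ 2)
        = fun ξ => (∑' n : ℕ, a s n * nhkC n ξ) ^ 2 from funext fun ξ => by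
          rw [nhk_diff_eq hs.1 x y ξ]]
    exact nhk_parseval (a s) (hasumm s hs.1)
  rw [intervalIntegral.integral_of_le ht.le,
    setIntegral_congr_fun measurableSet_Ioc (fun s hs => key s hs)]
  -- swap integral and sum
  have hmeas : ∀ n : ℕ, AEStronglyMeasurable (fun s => (a s n) ^ 2 / 2)
      (volume.restrict (Set.Ioc (0:ℝ) t)) := by
    intro n
    apply Continuous.aestronglyMeasurable
    rw [hadef]
    unfold nhkE
    fun_prop
  have hnn : ∀ (n : ℕ) (s : ℝ), 0 ≤ (a s n) ^ 2 / 2 := fun n s => by positivity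
  have hint : ∀ n : ℕ, IntegrableOn (fun s => (a s n) ^ 2 / 2) (Set.Ioc (0:ℝ) t) volume := by
    intro n
    have hc : Continuous (fun s => (a s n) ^ 2 / 2) := by
      rw [hadef]; unfold nhkE; fun_prop
    exact (hc.continuousOn.integrableOn_compact isCompact_Icc).mono_set Set.Ioc_subset_Icc_self
  have hval : ∀ (n : ℕ) (s : ℝ), (a s n) ^ 2 / 2
      = (2 * d n ^ 2) * Real.exp (-(2 * ((n:ℝ) + 1) ^ 2 * Real.pi ^ 2) * s) := by
    intro n s
    rw [hadef]
    simp only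
    unfold nhkE
    rw [show (2 * Real.exp (-((n + 1 : ℝ) ^ 2) * Real.pi ^ 2 * s) * d n) ^ 2 / 2
        = (2 * d n ^ 2) * (Real.exp (-((n + 1 : ℝ) ^ 2) * Real.pi ^ 2 * s)
            * Real.exp (-((n + 1 : ℝ) ^ 2) * Real.pi ^ 2 * s)) by ring,
      ← Real.exp_add]
    congr 2
    ring
  have hIbound : ∀ n : ℕ, (∫ s in Set.Ioc (0:ℝ) t, (a s n) ^ 2 / 2)
      ≤ d n ^ 2 / (((n:ℝ) + 1) ^ 2 * Real.pi ^ 2) := by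
    intro n
    have hc : (0:ℝ) < 2 * ((n:ℝ) + 1) ^ 2 * Real.pi ^ 2 := by positivity
    calc (∫ s in Set.Ioc (0:ℝ) t, (a s n) ^ 2 / 2)
        = (2 * d n ^ 2) * ∫ s in Set.Ioc (0:ℝ) t,
            Real.exp (-(2 * ((n:ℝ) + 1) ^ 2 * Real.pi ^ 2) * s) := by
          rw [← integral_const_mul]
          exact integral_congr_ae (by filter_upwards with s using hval n s)
      _ ≤ (2 * d n ^ 2) * (1 / (2 * ((n:ℝ) + 1) ^ 2 * Real.pi ^ 2)) := by
          apply mul_le_mul_of_nonneg_left (nhk_integral_exp_le hc ht) (by positivity)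
      _ = d n ^ 2 / (((n:ℝ) + 1) ^ 2 * Real.pi ^ 2) := by
          field_simp
  have hsumRHS : Summable (fun n : ℕ => d n ^ 2 / (((n:ℝ) + 1) ^ 2 * Real.pi ^ 2)) := by
    refine Summable.of_nonneg_of_le (fun n => by positivity) (fun n => ?_)
      (nhk_summable_inv_sq.mul_left (4 / Real.pi ^ 2))
    rw [show 4 / Real.pi ^ 2 * (1 / ((n:ℝ) + 1) ^ 2) = 4 / (((n:ℝ) + 1) ^ 2 * Real.pi ^ 2) by
      field_simp]
    apply div_le_div_of_nonneg_right ?_ (by positivity) |>.trans_eq rfl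
    · calc d n ^ 2 = |d n| ^ 2 := (sq_abs _).symm
        _ ≤ 2 ^ 2 := pow_le_pow_left₀ (abs_nonneg _) (hd2 n) 2
        _ = 4 := by norm_num
  have hne : (∑' n : ℕ, ∫⁻ s in Set.Ioc (0:ℝ) t, ‖(a s n) ^ 2 / 2‖₊ ∂volume) ≠ ⊤ := by
    have heq : ∀ n : ℕ, (∫⁻ s in Set.Ioc (0:ℝ) t, ‖(a s n) ^ 2 / 2‖₊ ∂volume)
        = ENNReal.ofReal (∫ s in Set.Ioc (0:ℝ) t, (a s n) ^ 2 / 2) := by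
      intro n
      rw [ofReal_integral_eq_lintegral_ofReal (hint n)
        (ae_of_all _ (fun s => hnn n s))]
      apply lintegral_congr
      intro s
      rw [← enorm_eq_nnnorm, ← ofReal_norm, Real.norm_eq_abs, abs_of_nonneg (hnn n s)]
    apply ne_top_of_le_ne_top (b := ENNReal.ofReal (∑' n : ℕ, d n ^ 2 / (((n:ℝ) + 1) ^ 2 * Real.pi ^ 2)))
      ENNReal.ofReal_ne_top
    rw [ENNReal.ofReal_tsum_of_nonneg (fun n => by positivity) hsumRHS]
    apply ENNReal.tsum_le_tsum
    intro n
    rw [heq n]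
    exact ENNReal.ofReal_le_ofReal (hIbound n)
  rw [integral_tsum hmeas hne]
  have hsumLHS : Summable (fun n : ℕ => ∫ s in Set.Ioc (0:ℝ) t, (a s n) ^ 2 / 2) :=
    Summable.of_nonneg_of_le (fun n => setIntegral_nonneg measurableSet_Ioc (fun s _ => hnn n s))
      hIbound hsumRHS
  calc (∑' n : ℕ, ∫ s in Set.Ioc (0:ℝ) t, (a s n) ^ 2 / 2)
      ≤ ∑' n : ℕ, d n ^ 2 / (((n:ℝ) + 1) ^ 2 * Real.pi ^ 2) :=
        Summable.tsum_le_tsum hIbound hsumLHS hsumRHS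
    _ ≤ 3 * δ := by
        apply nhk_stepC δ hδ hδ1 d hd2
        intro n
        have := hdl n
        rwa [hddef] at this
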